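/- arXiv:2509.09277 — 5 statements merged into one kernel-verified Lean document; each statement's English description precedes it below -/
import Mathlib

section
/- Suppose f : ℝ² × ℝ → ℝ² is continuously differentiable in x, and there exists c > 0 such that for all (x,t) and all v ∈ ℝ², vᵀ (∂f/∂x)(x,t) v ≤ −c‖v‖². If x₁, x₂ : ℝ → ℝ² are two solutions of ẋ = f(x,t), then ‖x₁(t) − x₂(t)‖ ≤ e^{−ct}‖x₁(0) − x₂(0)‖ for all t ≥ 0. -/
open Real
open scoped RealInnerProductSpace

lemma key_mono (c : ℝ) (f : EuclideanSpace ℝ (Fin 2) → ℝ → EuclideanSpace ℝ (Fin 2))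
    (hf : ∀ t : ℝ, ContDiff ℝ 1 (fun y => f y t))
    (hjac : ∀ (x : EuclideanSpace ℝ (Fin 2)) (t : ℝ) (v : EuclideanSpace ℝ (Fin 2)),
      ⟪fderiv ℝ (fun y => f y t) x v, v⟫ ≤ -c * ‖v‖ ^ 2)
    (t : ℝ) (x y : EuclideanSpace ℝ (Fin 2)) :
    ⟪f x t - f y t, x - y⟫ ≤ -c * ‖x - y‖ ^ 2 := by
  set e := x - y with he
  set φ : ℝ → ℝ := fun s => ⟪f (y + s • e) t, e⟫ with hφ
  have hd : ∀ s : ℝ, HasDerivAt φ ⟪fderiv ℝ (fun z => f z t) (y + s • e) e, e⟫ s := by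
    intro s
    have h1 : HasDerivAt (fun s : ℝ => y + s • e) e s := by
      simpa using ((hasDerivAt_id s).smul_const e).const_add y
    have h2 : HasFDerivAt (fun z => f z t) (fderiv ℝ (fun z => f z t) (y + s • e)) (y + s • e) :=
      ((hf t).differentiable one_ne_zero _).hasFDerivAt
    have h3 : HasDerivAt (fun s : ℝ => f (y + s • e) t)
        (fderiv ℝ (fun z => f z t) (y + s • e) e) s := by
      have := h2.comp_hasDerivAt s h1; exact this
    have h4 := h3.inner ℝ (hasDerivAt_const s e)
    rw [inner_zero_right, zero_add] at h4
    exact h4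
  obtain ⟨ξ, hξ, hslope⟩ := exists_hasDerivAt_eq_slope φ
      (fun s => ⟪fderiv ℝ (fun z => f z t) (y + s • e) e, e⟫) one_pos
      (fun s _ => (hd s).continuousAt.continuousWithinAt)
      (fun s _ => hd s)
  rw [sub_zero, div_one] at hslope
  have hb := hjac (y + ξ • e) t e
  have h10 : φ 1 - φ 0 ≤ -c * ‖e‖ ^ 2 := by rw [← hslope]; exact hb
  have hφ1 : φ 1 = ⟪f x t, e⟫ := by simp [hφ, he]
  have hφ0 : φ 0 = ⟪f y t, e⟫ := by simp [hφ]
  rw [inner_sub_left]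
  rw [hφ1, hφ0] at h10
  exact h10

theorem contraction_euclidean_metric
    (c : ℝ) (hc : 0 < c)
    (f : EuclideanSpace ℝ (Fin 2) → ℝ → EuclideanSpace ℝ (Fin 2))
    (hf : ∀ t : ℝ, ContDiff ℝ 1 (fun y => f y t))
    (hjac : ∀ (x : EuclideanSpace ℝ (Fin 2)) (t : ℝ) (v : EuclideanSpace ℝ (Fin 2)),
      ⟪fderiv ℝ (fun y => f y t) x v, v⟫ ≤ -c * ‖v‖ ^ 2)
    (x₁ x₂ : ℝ → EuclideanSpace ℝ (Fin 2))
    (hx₁ : ∀ t : ℝ, HasDerivAt x₁ (f (x₁ t) t) t)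
    (hx₂ : ∀ t : ℝ, HasDerivAt x₂ (f (x₂ t) t) t) :
    ∀ t : ℝ, 0 ≤ t → ‖x₁ t - x₂ t‖ ≤ Real.exp (-c * t) * ‖x₁ 0 - x₂ 0‖ := by
  intro t ht
  set e : ℝ → EuclideanSpace ℝ (Fin 2) := fun s => x₁ s - x₂ s with he
  have hde : ∀ s, HasDerivAt e (f (x₁ s) s - f (x₂ s) s) s := fun s => (hx₁ s).sub (hx₂ s)
  set h : ℝ → ℝ := fun s => Real.exp (2 * c * s) * ⟪e s, e s⟫ with hh
  have hdh : ∀ s, HasDerivAt h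
      (Real.exp (2 * c * s) * (2 * c) * ⟪e s, e s⟫ +
        Real.exp (2 * c * s) *
          (⟪e s, f (x₁ s) s - f (x₂ s) s⟫ + ⟪f (x₁ s) s - f (x₂ s) s, e s⟫)) s := by
    intro s
    have h1 : HasDerivAt (fun s => Real.exp (2 * c * s)) (Real.exp (2 * c * s) * (2 * c)) s := by
      simpa using ((hasDerivAt_id s).const_mul (2 * c)).exp
    have h2 := (hde s).inner ℝ (hde s)
    exact h1.mul h2
  have hdh_le : ∀ s, (Real.exp (2 * c * s) * (2 * c) * ⟪e s, e s⟫ +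
        Real.exp (2 * c * s) *
          (⟪e s, f (x₁ s) s - f (x₂ s) s⟫ + ⟪f (x₁ s) s - f (x₂ s) s, e s⟫)) ≤ 0 := by
    intro s
    have hkey := key_mono c f hf hjac s (x₁ s) (x₂ s)
    have h2 : ⟪e s, f (x₁ s) s - f (x₂ s) s⟫ = ⟪f (x₁ s) s - f (x₂ s) s, e s⟫ :=
      real_inner_comm _ _
    have h3 : ⟪e s, e s⟫ = ‖e s‖ ^ 2 := real_inner_self_eq_norm_sq _
    rw [h2, h3]
    have hexp : (0:ℝ) < Real.exp (2 * c * s) := Real.exp_pos _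
    have hes : e s = x₁ s - x₂ s := rfl
    rw [hes]
    nlinarith [hkey, sq_nonneg (‖x₁ s - x₂ s‖)]
  have hanti : AntitoneOn h (Set.Icc 0 t) := by
    apply antitoneOn_of_deriv_nonpos (convex_Icc 0 t)
    · exact fun s _ => (hdh s).continuousAt.continuousWithinAt
    · exact fun s _ => ((hdh s).differentiableAt).differentiableWithinAt
    · intro s _
      rw [(hdh s).deriv]
      exact hdh_le s
  have hht : h t ≤ h 0 := hanti (Set.left_mem_Icc.2 ht) (Set.right_mem_Icc.2 ht) ht
  have hA : ⟪e t, e t⟫ = ‖e t‖ ^ 2 := real_inner_self_eq_norm_sq _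
  have hB : ⟪e 0, e 0⟫ = ‖e 0‖ ^ 2 := real_inner_self_eq_norm_sq _
  have hh0 : h 0 = ‖e 0‖ ^ 2 := by
    show Real.exp (2 * c * 0) * ⟪e 0, e 0⟫ = _
    rw [mul_zero, Real.exp_zero, one_mul, hB]
  have hhtval : h t = Real.exp (2 * c * t) * ‖e t‖ ^ 2 := by
    show Real.exp (2 * c * t) * ⟪e t, e t⟫ = _
    rw [hA]
  have hmul : Real.exp (-c * t) ^ 2 * Real.exp (2 * c * t) = 1 := by
    rw [sq, ← Real.exp_add, ← Real.exp_add, show -c * t + -c * t + 2 * c * t = 0 by ring,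
      Real.exp_zero]
  have hsq : ‖e t‖ ^ 2 ≤ (Real.exp (-c * t) * ‖e 0‖) ^ 2 := by
    rw [hhtval, hh0] at hht
    have hexp := Real.exp_pos (2 * c * t)
    nlinarith [hht, hmul, sq_nonneg (‖e 0‖)]
  have := Real.sqrt_le_sqrt hsq
  rwa [Real.sqrt_sq (norm_nonneg _), Real.sqrt_sq (by positivity)] at this
end

section
/- Let h : ℝ² × ℝ → ℝ² be continuously differentiable in x with vᵀ (∂h/∂x)(x,t) v ≤ −c‖v‖² for all (x,t,v), where c > 0, and let r : ℝ → ℝ² be continuous. If x₁,…,x_N : ℝ → ℝ² all solve ẋ_k(t) = h(x_k(t),t) + r(t), then for all i, j, ‖x_i(t) − x_j(t)‖ ≤ e^{−ct}‖x_i(0) − x_j(0)‖; in particular all trajectories synchronize exponentially: ‖x_i(t) − x_j(t)‖ → 0 as t → ∞. -/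
open Real Filter
open scoped RealInnerProductSpace Topology

theorem partial_contraction_synchronization
    (c : ℝ) (hc : 0 < c) (N : ℕ)
    (h : EuclideanSpace ℝ (Fin 2) → ℝ → EuclideanSpace ℝ (Fin 2))
    (hh : ∀ t : ℝ, ContDiff ℝ 1 (fun y => h y t))
    (hjac : ∀ (x : EuclideanSpace ℝ (Fin 2)) (t : ℝ) (v : EuclideanSpace ℝ (Fin 2)),
      ⟪fderiv ℝ (fun y => h y t) x v, v⟫ ≤ -c * ‖v‖ ^ 2)
    (r : ℝ → EuclideanSpace ℝ (Fin 2)) (hr : Continuous r)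
    (x : Fin N → ℝ → EuclideanSpace ℝ (Fin 2))
    (hx : ∀ (k : Fin N) (t : ℝ), HasDerivAt (x k) (h (x k t) t + r t) t) :
    ∀ i j : Fin N,
      (∀ t : ℝ, 0 ≤ t → ‖x i t - x j t‖ ≤ Real.exp (-c * t) * ‖x i 0 - x j 0‖) ∧
      Tendsto (fun t => ‖x i t - x j t‖) atTop (𝓝 0) := by
  -- key monotonicity lemma: ⟪h a t - h b t, a - b⟫ ≤ -c ‖a - b‖²
  have key : ∀ (t : ℝ) (a b : EuclideanSpace ℝ (Fin 2)),
      ⟪h a t - h b t, a - b⟫ ≤ -c * ‖a - b‖ ^ 2 := by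
    intro t a b
    set v := a - b with hv
    -- φ s = ⟪h (b + s v) t, v⟫ + c‖v‖² s is antitone
    set φ : ℝ → ℝ := fun s => ⟪h (b + s • v) t, v⟫ + c * ‖v‖ ^ 2 * s with hφ
    have hγ : ∀ s : ℝ, HasDerivAt (fun s : ℝ => b + s • v) v s := by
      intro s
      simpa using ((hasDerivAt_id s).smul_const v).const_add b
    have hφd : ∀ s : ℝ, HasDerivAt φ
        (⟪fderiv ℝ (fun y => h y t) (b + s • v) v, v⟫ + c * ‖v‖ ^ 2) s := by
      intro s
      have hd : HasFDerivAt (fun y => h y t) (fderiv ℝ (fun y => h y t) (b + s • v)) (b + s • v) :=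
        (((hh t).differentiable one_ne_zero) (b + s • v)).hasFDerivAt
      have h1 : HasDerivAt (fun s : ℝ => h (b + s • v) t)
          (fderiv ℝ (fun y => h y t) (b + s • v) v) s :=
        by have := hd.comp_hasDerivAt s (hγ s); exact this
      have h2 := (h1.inner ℝ (hasDerivAt_const s v))
      simp only [inner_zero_right, add_zero] at h2
      exact (h2.add (((hasDerivAt_id s).const_mul (c * ‖v‖ ^ 2)))).congr_deriv (by simp)
    have hmono : Antitone φ := by
      apply antitone_of_deriv_nonpos (fun s => (hφd s).differentiableAt)
      intro s
      rw [(hφd s).deriv]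
      have := hjac (b + s • v) t v
      linarith
    have h10 := hmono (show (0:ℝ) ≤ 1 by norm_num)
    simp only [hφ, zero_smul, add_zero, one_smul, mul_one, mul_zero] at h10
    have hab : b + v = a := by rw [hv]; abel
    rw [hab] at h10
    have : ⟪h a t - h b t, v⟫ = ⟪h a t, v⟫ - ⟪h b t, v⟫ := inner_sub_left _ _ _
    linarith [this]
  intro i j
  set e : ℝ → EuclideanSpace ℝ (Fin 2) := fun t => x i t - x j t with he
  have hed : ∀ t : ℝ, HasDerivAt e (h (x i t) t - h (x j t) t) t := by
    intro t
    have := (hx i t).sub (hx j t)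
    exact this.congr_deriv (by abel)
  -- F t = exp(2ct) ‖e t‖² is antitone
  set F : ℝ → ℝ := fun t => Real.exp (2 * c * t) * ⟪e t, e t⟫ with hF
  have hFd : ∀ t : ℝ, HasDerivAt F
      (2 * c * Real.exp (2 * c * t) * ⟪e t, e t⟫ +
        Real.exp (2 * c * t) * (⟪e t, h (x i t) t - h (x j t) t⟫ +
          ⟪h (x i t) t - h (x j t) t, e t⟫)) t := by
    intro t
    have h1 : HasDerivAt (fun t => Real.exp (2 * c * t)) (2 * c * Real.exp (2 * c * t)) t := by
      have := (((hasDerivAt_id t).const_mul (2 * c))).exp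
      simpa [mul_comm] using this
    have h2 := (hed t).inner ℝ (hed t)
    exact h1.mul h2
  have hFmono : Antitone F := by
    apply antitone_of_deriv_nonpos (fun t => (hFd t).differentiableAt)
    intro t
    rw [(hFd t).deriv]
    have hk : ⟪h (x i t) t - h (x j t) t, e t⟫ ≤ -c * ‖e t‖ ^ 2 := key t (x i t) (x j t)
    have hsym : ⟪e t, h (x i t) t - h (x j t) t⟫ = ⟪h (x i t) t - h (x j t) t, e t⟫ :=
      real_inner_comm _ _
    have hee : ⟪e t, e t⟫ = ‖e t‖ ^ 2 := real_inner_self_eq_norm_sq _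
    have hexp : (0:ℝ) < Real.exp (2 * c * t) := Real.exp_pos _
    rw [hsym, hee]
    have : 2 * c * ‖e t‖ ^ 2 + (⟪h (x i t) t - h (x j t) t, e t⟫ +
        ⟪h (x i t) t - h (x j t) t, e t⟫) ≤ 0 := by linarith
    calc 2 * c * Real.exp (2 * c * t) * ‖e t‖ ^ 2 +
          Real.exp (2 * c * t) * (⟪h (x i t) t - h (x j t) t, e t⟫ +
            ⟪h (x i t) t - h (x j t) t, e t⟫)
        = Real.exp (2 * c * t) * (2 * c * ‖e t‖ ^ 2 +
            (⟪h (x i t) t - h (x j t) t, e t⟫ + ⟪h (x i t) t - h (x j t) t, e t⟫)) := by ring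
      _ ≤ Real.exp (2 * c * t) * 0 := by
          exact mul_le_mul_of_nonneg_left this hexp.le
      _ = 0 := mul_zero _
  have hbound : ∀ t : ℝ, 0 ≤ t → ‖e t‖ ≤ Real.exp (-c * t) * ‖e 0‖ := by
    intro t ht
    have hFle : F t ≤ F 0 := hFmono ht
    simp only [hF, mul_zero, Real.exp_zero, one_mul] at hFle
    have hee : ∀ s, ⟪e s, e s⟫ = ‖e s‖ ^ 2 := fun s => real_inner_self_eq_norm_sq _
    rw [hee, hee] at hFle
    have hsq : ‖e t‖ ^ 2 ≤ (Real.exp (-c * t) * ‖e 0‖) ^ 2 := by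
      have hexp : (0:ℝ) < Real.exp (2 * c * t) := Real.exp_pos _
      have h1 : ‖e t‖ ^ 2 ≤ Real.exp (-(2 * c * t)) * ‖e 0‖ ^ 2 := by
        rw [Real.exp_neg, ← div_eq_inv_mul, le_div_iff₀ hexp]
        linarith [hFle, mul_comm (Real.exp (2 * c * t)) (‖e t‖ ^ 2)]
      calc ‖e t‖ ^ 2 ≤ Real.exp (-(2 * c * t)) * ‖e 0‖ ^ 2 := h1
        _ = (Real.exp (-c * t) * ‖e 0‖) ^ 2 := by
            rw [mul_pow, ← Real.exp_nat_mul]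
            ring_nf
    have hrhs : 0 ≤ Real.exp (-c * t) * ‖e 0‖ :=
      mul_nonneg (Real.exp_pos _).le (norm_nonneg _)
    have := Real.sqrt_le_sqrt hsq
    rwa [Real.sqrt_sq (norm_nonneg _), Real.sqrt_sq hrhs] at this
  refine ⟨hbound, ?_⟩
  have hz : Tendsto (fun t => Real.exp (-c * t) * ‖e 0‖) atTop (𝓝 0) := by
    have : Tendsto (fun t : ℝ => -c * t) atTop atBot :=
      tendsto_id.const_mul_atTop_of_neg (by linarith)
    simpa using (Real.tendsto_exp_atBot.comp this).mul_const ‖e 0‖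
  refine squeeze_zero' ?_ ?_ hz
  · exact Eventually.of_forall fun t => norm_nonneg _
  · filter_upwards [eventually_ge_atTop (0:ℝ)] with t ht
    exact hbound t ht
end

section
/- Suppose f : ℝⁿ × ℝ → ℝⁿ satisfies ⟨f(x,t) − f(y,t), x − y⟩ ≤ −c‖x − y‖² for all x, y, t with c > 0 (one-sided Lipschitz/contracting condition), and let d : ℝⁿ × ℝ → ℝⁿ satisfy ‖d(x,t)‖ ≤ d̄ for all (x,t). If x solves ẋ = f(x,t) + d(x,t) and y solves ẏ = f(y,t), then ‖x(t) − y(t)‖ ≤ e^{−ct}‖x(0) − y(0)‖ + (d̄/c)(1 − e^{−ct}) for all t ≥ 0; in particular the separation is ultimately bounded by d̄/c. -/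
open Real
open scoped RealInnerProductSpace

theorem contraction_robustness_error_ball
    (n : ℕ) (c dbar : ℝ) (hc : 0 < c)
    (f d : EuclideanSpace ℝ (Fin n) → ℝ → EuclideanSpace ℝ (Fin n))
    (hf : ∀ (x y : EuclideanSpace ℝ (Fin n)) (t : ℝ),
      ⟪f x t - f y t, x - y⟫ ≤ -c * ‖x - y‖ ^ 2)
    (hd : ∀ (x : EuclideanSpace ℝ (Fin n)) (t : ℝ), ‖d x t‖ ≤ dbar)
    (x y : ℝ → EuclideanSpace ℝ (Fin n))
    (hx : ∀ t : ℝ, HasDerivAt x (f (x t) t + d (x t) t) t)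
    (hy : ∀ t : ℝ, HasDerivAt y (f (y t) t) t) :
    ∀ t : ℝ, 0 ≤ t →
      ‖x t - y t‖ ≤ Real.exp (-c * t) * ‖x 0 - y 0‖
        + (dbar / c) * (1 - Real.exp (-c * t)) := by
  intro T hT
  set e : ℝ → EuclideanSpace ℝ (Fin n) := fun t => x t - y t with he
  set e' : ℝ → EuclideanSpace ℝ (Fin n) :=
    fun t => f (x t) t + d (x t) t - f (y t) t with he'
  have hde : ∀ t, HasDerivAt e (e' t) t := fun t => (hx t).sub (hy t)
  -- inner product bound
  have hkey : ∀ s : ℝ, ⟪e' s, e s⟫ ≤ -c * ‖e s‖ ^ 2 + dbar * ‖e s‖ := by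
    intro s
    have h1 : e' s = (f (x s) s - f (y s) s) + d (x s) s := by
      simp only [he']; abel
    have h2 : ⟪e' s, e s⟫ =
        ⟪f (x s) s - f (y s) s, x s - y s⟫ + ⟪d (x s) s, e s⟫ := by
      rw [h1, inner_add_left]
    rw [h2]
    have h3 : ⟪d (x s) s, e s⟫ ≤ dbar * ‖e s‖ := by
      calc ⟪d (x s) s, e s⟫ ≤ ‖d (x s) s‖ * ‖e s‖ := real_inner_le_norm _ _
        _ ≤ dbar * ‖e s‖ := by
            have := hd (x s) s
            nlinarith [norm_nonneg (e s)]
    have := hf (x s) (y s) s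
    linarith
  -- Dini derivative condition
  have hdini : ∀ s : ℝ, ∀ r : ℝ, -c * ‖e s‖ + dbar < r →
      ∃ᶠ z in nhdsWithin s (Set.Ioi s), (z - s)⁻¹ * (‖e z‖ - ‖e s‖) < r := by
    intro s r hr
    by_cases hes : e s = 0
    · -- quotient tends to ‖e' s‖ ≤ dbar
      have hxy : x s = y s := sub_eq_zero.mp hes
      have hesd : ‖e' s‖ ≤ dbar := by
        have h0 : e' s = d (x s) s := by simp [he', hxy]
        rw [h0]; exact hd _ _
      have hslope : Filter.Tendsto (slope e s) (nhdsWithin s {s}ᶜ) (nhds (e' s)) :=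
        hasDerivAt_iff_tendsto_slope.mp (hde s)
      have hslope' : Filter.Tendsto (fun z => ‖slope e s z‖)
          (nhdsWithin s (Set.Ioi s)) (nhds ‖e' s‖) :=
        (hslope.mono_left (nhdsWithin_mono s fun z hz =>
          ne_of_gt (Set.mem_Ioi.mp hz))).norm
      have hev : ∀ᶠ z in nhdsWithin s (Set.Ioi s),
          (z - s)⁻¹ * (‖e z‖ - ‖e s‖) = ‖slope e s z‖ := by
        filter_upwards [self_mem_nhdsWithin] with z hz
        have hzs : 0 < z - s := sub_pos.mpr (Set.mem_Ioi.mp hz)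
        rw [slope_def_module, hes, sub_zero, norm_zero, sub_zero, norm_smul,
          norm_inv, Real.norm_eq_abs, abs_of_pos hzs]
      have hlt : ‖e' s‖ < r := by
        rw [hes, norm_zero, mul_zero, zero_add] at hr
        linarith
      have : ∀ᶠ z in nhdsWithin s (Set.Ioi s),
          (z - s)⁻¹ * (‖e z‖ - ‖e s‖) < r := by
        filter_upwards [hev, hslope'.eventually_lt_const hlt] with z h1 h2
        rw [h1]; exact h2
      exact this.frequently
    · -- norm is differentiable here
      have hne : ‖e s‖ ≠ 0 := fun h => hes (norm_eq_zero.mp h)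
      have hpos : 0 < ‖e s‖ := lt_of_le_of_ne (norm_nonneg _) (Ne.symm hne)
      have hinner : HasDerivAt (fun t => ⟪e t, e t⟫)
          (⟪e s, e' s⟫ + ⟪e' s, e s⟫) s := (hde s).inner ℝ (hde s)
      have hinne : ⟪e s, e s⟫ ≠ 0 := by
        rw [real_inner_self_eq_norm_sq]; positivity
      have hsqrt : HasDerivAt (fun t => Real.sqrt ⟪e t, e t⟫)
          ((⟪e s, e' s⟫ + ⟪e' s, e s⟫) / (2 * Real.sqrt ⟪e s, e s⟫)) s :=
        hinner.sqrt hinne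
      have heq : (fun t => Real.sqrt ⟪e t, e t⟫) = fun t => ‖e t‖ := by
        funext t
        rw [real_inner_self_eq_norm_mul_norm, Real.sqrt_mul_self (norm_nonneg _)]
      have hsqval : Real.sqrt ⟪e s, e s⟫ = ‖e s‖ := by
        rw [real_inner_self_eq_norm_mul_norm, Real.sqrt_mul_self (norm_nonneg _)]
      rw [heq, hsqval] at hsqrt
      have hDle : (⟪e s, e' s⟫ + ⟪e' s, e s⟫) / (2 * ‖e s‖) ≤ -c * ‖e s‖ + dbar := by
        have hsym : ⟪e s, e' s⟫ = ⟪e' s, e s⟫ := real_inner_comm _ _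
        rw [hsym, div_le_iff₀ (by positivity)]
        have := hkey s
        nlinarith [hpos]
      have hslope : Filter.Tendsto (slope (fun t => ‖e t‖) s)
          (nhdsWithin s (Set.Ioi s))
          (nhds ((⟪e s, e' s⟫ + ⟪e' s, e s⟫) / (2 * ‖e s‖))) :=
        (hasDerivAt_iff_tendsto_slope.mp hsqrt).mono_left
          (nhdsWithin_mono s fun z hz => ne_of_gt (Set.mem_Ioi.mp hz))
      have hlt : (⟪e s, e' s⟫ + ⟪e' s, e s⟫) / (2 * ‖e s‖) < r := lt_of_le_of_lt hDle hr
      have : ∀ᶠ z in nhdsWithin s (Set.Ioi s),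
          (z - s)⁻¹ * (‖e z‖ - ‖e s‖) < r := by
        filter_upwards [hslope.eventually_lt_const hlt] with z h2
        rwa [slope_def_field, div_eq_inv_mul] at h2
      exact this.frequently
  -- apply Gronwall
  have hcont : ContinuousOn (fun t => ‖e t‖) (Set.Icc 0 T) :=
    (continuous_norm.comp (continuous_iff_continuousAt.mpr fun t => (hde t).continuousAt)).continuousOn
  have hG := le_gronwallBound_of_liminf_deriv_right_le (f := fun t => ‖e t‖)
    (f' := fun t => -c * ‖e t‖ + dbar) (δ := ‖e 0‖) (K := -c) (ε := dbar)
    (a := 0) (b := T) hcont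
    (fun s _ r hr => hdini s r hr) (le_refl _)
    (fun s _ => le_refl _) T ⟨hT, le_refl T⟩
  rw [gronwallBound_of_K_ne_0 (by linarith : (-c) ≠ 0)] at hG
  simp only [sub_zero] at hG
  have : ‖e 0‖ * Real.exp (-c * T) + dbar / (-c) * (Real.exp (-c * T) - 1)
      = Real.exp (-c * T) * ‖e 0‖ + dbar / c * (1 - Real.exp (-c * T)) := by
    ring
  rw [this] at hG
  exact hG
end

section
/- Let x₁, x₂ : [0,∞) → ℝ² solve ẋ_k = (χ(x_k) − κβ)x_k + ω₀ J x_k + u(t) for a common continuous input u, with χ(x) = ξ(2X² − ‖x‖²), ξ > 0, and J = [[0,−1],[1,0]]. If κβ − 2ξX² ≥ c > 0, then ‖x₁(t) − x₂(t)‖ ≤ e^{−ct}‖x₁(0) − x₂(0)‖ for all t ≥ 0. -/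
open Matrix

noncomputable def eunorm2 (v : Fin 2 → ℝ) : ℝ :=
  Real.sqrt ((v 0) ^ 2 + (v 1) ^ 2)

theorem dvoc_synchronization_certificate
    (ξ X κ β ω₀ c : ℝ) (hξ : 0 < ξ)
    (hcond : κ * β - 2 * ξ * X ^ 2 ≥ c) (hc : 0 < c)
    (J : Matrix (Fin 2) (Fin 2) ℝ) (hJ : J = !![0, -1; 1, 0])
    (χ : (Fin 2 → ℝ) → ℝ)
    (hχ : χ = fun y => ξ * (2 * X ^ 2 - ((y 0) ^ 2 + (y 1) ^ 2)))
    (u : ℝ → Fin 2 → ℝ) (hu : Continuous u)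
    (x₁ x₂ : ℝ → Fin 2 → ℝ)
    (hx₁ : ∀ (t : ℝ) (i : Fin 2), HasDerivAt (fun s => x₁ s i)
      (((χ (x₁ t) - κ * β) • x₁ t + ω₀ • J.mulVec (x₁ t) + u t) i) t)
    (hx₂ : ∀ (t : ℝ) (i : Fin 2), HasDerivAt (fun s => x₂ s i)
      (((χ (x₂ t) - κ * β) • x₂ t + ω₀ • J.mulVec (x₂ t) + u t) i) t) :
    ∀ t : ℝ, 0 ≤ t →
      eunorm2 (x₁ t - x₂ t) ≤ Real.exp (-c * t) * eunorm2 (x₁ 0 - x₂ 0) := by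
  -- Lyapunov function times exponential
  set E : ℝ → ℝ := fun s => (x₁ s 0 - x₂ s 0) ^ 2 + (x₁ s 1 - x₂ s 1) ^ 2 with hE
  set f : ℝ → ℝ := fun s => E s * Real.exp (2 * c * s) with hf
  have hderiv : ∀ s : ℝ, ∃ d : ℝ, HasDerivAt f d s ∧ d ≤ 0 := by
    intro s
    have h10 := hx₁ s 0
    have h11 := hx₁ s 1
    have h20 := hx₂ s 0
    have h21 := hx₂ s 1
    set d10 := ((χ (x₁ s) - κ * β) • x₁ s + ω₀ • J.mulVec (x₁ s) + u s) 0 with hd10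
    set d11 := ((χ (x₁ s) - κ * β) • x₁ s + ω₀ • J.mulVec (x₁ s) + u s) 1 with hd11
    set d20 := ((χ (x₂ s) - κ * β) • x₂ s + ω₀ • J.mulVec (x₂ s) + u s) 0 with hd20
    set d21 := ((χ (x₂ s) - κ * β) • x₂ s + ω₀ • J.mulVec (x₂ s) + u s) 1 with hd21
    have hE' : HasDerivAt E
        ((2 : ℕ) * (x₁ s 0 - x₂ s 0) ^ 1 * (d10 - d20)
          + (2 : ℕ) * (x₁ s 1 - x₂ s 1) ^ 1 * (d11 - d21)) s := by
      exact ((h10.sub h20).pow 2).add ((h11.sub h21).pow 2)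
    have hexp : HasDerivAt (fun r : ℝ => Real.exp (2 * c * r))
        (Real.exp (2 * c * s) * (2 * c)) s := by
      have := ((hasDerivAt_id s).const_mul (2 * c)).exp
      simpa using this
    have hF : HasDerivAt f
        (((2 : ℕ) * (x₁ s 0 - x₂ s 0) ^ 1 * (d10 - d20)
          + (2 : ℕ) * (x₁ s 1 - x₂ s 1) ^ 1 * (d11 - d21)) * Real.exp (2 * c * s)
          + E s * (Real.exp (2 * c * s) * (2 * c))) s := hE'.mul hexp
    refine ⟨_, hF, ?_⟩
    have hd10' : d10 = (χ (x₁ s) - κ * β) * x₁ s 0 - ω₀ * x₁ s 1 + u s 0 := by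
      simp [hd10, hJ, Matrix.mulVec, dotProduct, Fin.sum_univ_two,
        Matrix.vecHead, Matrix.vecTail, Pi.add_apply, Pi.smul_apply, smul_eq_mul]
      try ring
    have hd11' : d11 = (χ (x₁ s) - κ * β) * x₁ s 1 + ω₀ * x₁ s 0 + u s 1 := by
      simp [hd11, hJ, Matrix.mulVec, dotProduct, Fin.sum_univ_two,
        Matrix.vecHead, Matrix.vecTail, Pi.add_apply, Pi.smul_apply, smul_eq_mul]
      try ring
    have hd20' : d20 = (χ (x₂ s) - κ * β) * x₂ s 0 - ω₀ * x₂ s 1 + u s 0 := by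
      simp [hd20, hJ, Matrix.mulVec, dotProduct, Fin.sum_univ_two,
        Matrix.vecHead, Matrix.vecTail, Pi.add_apply, Pi.smul_apply, smul_eq_mul]
      try ring
    have hd21' : d21 = (χ (x₂ s) - κ * β) * x₂ s 1 + ω₀ * x₂ s 0 + u s 1 := by
      simp [hd21, hJ, Matrix.mulVec, dotProduct, Fin.sum_univ_two,
        Matrix.vecHead, Matrix.vecTail, Pi.add_apply, Pi.smul_apply, smul_eq_mul]
      try ring
    have hexp_pos : (0:ℝ) < Real.exp (2 * c * s) := Real.exp_pos _
    have hkey : ((2 : ℕ) * (x₁ s 0 - x₂ s 0) ^ 1 * (d10 - d20)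
          + (2 : ℕ) * (x₁ s 1 - x₂ s 1) ^ 1 * (d11 - d21)) + E s * (2 * c) ≤ 0 := by
      simp only [hE]
      rw [hd10', hd11', hd20', hd21']
      simp only [hχ]
      have h1 : 0 ≤ (κ * β - 2 * ξ * X ^ 2 - c)
          * ((x₁ s 0 - x₂ s 0) ^ 2 + (x₁ s 1 - x₂ s 1) ^ 2) := by
        have : (0:ℝ) ≤ κ * β - 2 * ξ * X ^ 2 - c := by linarith
        positivity
      have h2 : 0 ≤ ξ * ((x₁ s 0 ^ 2 + x₁ s 1 ^ 2 + x₂ s 0 ^ 2 + x₂ s 1 ^ 2)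
          * ((x₁ s 0 - x₂ s 0) ^ 2 + (x₁ s 1 - x₂ s 1) ^ 2)
          + (x₁ s 0 ^ 2 + x₁ s 1 ^ 2 - x₂ s 0 ^ 2 - x₂ s 1 ^ 2) ^ 2) := by positivity
      push_cast
      nlinarith [h1, h2]
    calc ((2 : ℕ) * (x₁ s 0 - x₂ s 0) ^ 1 * (d10 - d20)
          + (2 : ℕ) * (x₁ s 1 - x₂ s 1) ^ 1 * (d11 - d21)) * Real.exp (2 * c * s)
          + E s * (Real.exp (2 * c * s) * (2 * c))
        = (((2 : ℕ) * (x₁ s 0 - x₂ s 0) ^ 1 * (d10 - d20)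
          + (2 : ℕ) * (x₁ s 1 - x₂ s 1) ^ 1 * (d11 - d21)) + E s * (2 * c)) * Real.exp (2 * c * s) := by
          ring
      _ ≤ 0 := mul_nonpos_of_nonpos_of_nonneg hkey hexp_pos.le
  have hdiff : Differentiable ℝ f := fun s => ((hderiv s).choose_spec.1).differentiableAt
  have hanti : Antitone f := by
    apply antitone_of_deriv_nonpos hdiff
    intro s
    obtain ⟨d, hd, hd0⟩ := hderiv s
    rw [hd.deriv]; exact hd0
  intro t ht
  have hft : f t ≤ f 0 := hanti ht
  have hE0 : f 0 = E 0 := by simp [hf]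
  have hEt : E t ≤ Real.exp (-(2 * c * t)) * E 0 := by
    have hexp_pos : (0:ℝ) < Real.exp (2 * c * t) := Real.exp_pos _
    rw [Real.exp_neg]
    have h := mul_le_mul_of_nonneg_right hft (inv_nonneg.mpr hexp_pos.le)
    rw [hE0] at h
    calc E t = E t * Real.exp (2 * c * t) * (Real.exp (2 * c * t))⁻¹ := by
          field_simp
      _ ≤ E 0 * (Real.exp (2 * c * t))⁻¹ := h
      _ = (Real.exp (2 * c * t))⁻¹ * E 0 := mul_comm _ _
  have hEnonneg : 0 ≤ E 0 := by positivity
  have hsub0 : (x₁ t - x₂ t) 0 = x₁ t 0 - x₂ t 0 := rfl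
  have hsub1 : (x₁ t - x₂ t) 1 = x₁ t 1 - x₂ t 1 := rfl
  have : eunorm2 (x₁ t - x₂ t) = Real.sqrt (E t) := by
    simp [eunorm2, hE, hsub0, hsub1]
  rw [this]
  have h0 : eunorm2 (x₁ 0 - x₂ 0) = Real.sqrt (E 0) := by
    simp [eunorm2, hE]
  rw [h0]
  have : Real.sqrt (E t) ≤ Real.sqrt (Real.exp (-(2 * c * t)) * E 0) :=
    Real.sqrt_le_sqrt hEt
  refine this.trans (le_of_eq ?_)
  rw [Real.sqrt_mul (Real.exp_nonneg _)]
  congr 1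
  rw [show (-(2 * c * t)) = (-c * t) + (-c * t) by ring, Real.exp_add,
    Real.sqrt_mul_self (Real.exp_nonneg _)]
end

section
/- Let h(x) = (χ(x) − a)x + ω₀ J x on ℝ² with χ(x) = ξ(2X² − ‖x‖²), ξ > 0, a ∈ ℝ, J = [[0,−1],[1,0]]. Then for all x, y ∈ ℝ², ⟨h(x) − h(y), x − y⟩ ≤ (2ξX² − a)·‖x − y‖². In particular, if a > 2ξX², h is one-sided Lipschitz with negative constant. -/
open Matrix

theorem dvoc_one_sided_lipschitz
    (ξ X a ω₀ : ℝ) (hξ : 0 < ξ)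
    (J : Matrix (Fin 2) (Fin 2) ℝ) (hJ : J = !![0, -1; 1, 0])
    (χ : (Fin 2 → ℝ) → ℝ)
    (hχ : χ = fun y => ξ * (2 * X ^ 2 - ((y 0) ^ 2 + (y 1) ^ 2)))
    (h : (Fin 2 → ℝ) → Fin 2 → ℝ)
    (hh : h = fun y => (χ y - a) • y + ω₀ • J.mulVec y) :
    ∀ x y : Fin 2 → ℝ,
      (h x - h y) ⬝ᵥ (x - y) ≤ (2 * ξ * X ^ 2 - a) * ((x - y) ⬝ᵥ (x - y)) := by
  intro x y
  subst hJ hχ hh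
  simp only [dotProduct, Fin.sum_univ_two, Pi.sub_apply, Pi.add_apply, Pi.smul_apply,
    smul_eq_mul, mulVec, Matrix.cons_val', Matrix.cons_val_zero, Matrix.cons_val_one,
    Matrix.head_cons, Matrix.empty_val', Matrix.cons_val_fin_one, Matrix.head_fin_const,
    Matrix.of_apply, Matrix.cons_val_zero, Matrix.cons_val_one]
  nlinarith [mul_nonneg hξ.le (sq_nonneg (x 0 ^ 2 + x 1 ^ 2 - y 0 ^ 2 - y 1 ^ 2)),
    mul_nonneg hξ.le (mul_nonneg
      (by positivity : (0:ℝ) ≤ x 0 ^ 2 + x 1 ^ 2 + y 0 ^ 2 + y 1 ^ 2)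
      (by positivity : (0:ℝ) ≤ (x 0 - y 0) ^ 2 + (x 1 - y 1) ^ 2))]
end
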